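/- Let M be a matroid on {1,...,n} with bases B_1, ..., B_t listed so that x^{B_1} <_lex ... <_lex x^{B_t}, and let I be the squarefree matroidal ideal generated by the monomials m_i = x^{B_i}, which has linear quotients with respect to this ordering; let A_i be the critical-index sets. Then I is crit-monotone: for every i and every j ∈ A_i, the unique decomposition x_j·m_i = u·m_k with supp(u) ∩ A_k = ∅ has u equal to a single variable x_l, and A_k ⊆ A_i. -/

import Mathlib

open MvPolynomial
open scoped symmDiff

/-- `lexLT B' B` encodes `x^{B'} <_lex x^{B}` in the lexicographic order with
`x_1 > x_2 > … > x_n`: the minimum element of the symmetric difference `B ∆ B'`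
belongs to `B`. -/
def lexLT {n : ℕ} (B' B : Finset (Fin n)) : Prop :=
  ∃ a ∈ B, a ∈ B ∆ B' ∧ ∀ b ∈ B ∆ B', a ≤ b

/-- The exponent vector of the squarefree monomial `x^B`. -/
noncomputable def baseExp {n : ℕ} (B : Finset (Fin n)) : Fin n →₀ ℕ :=
  ∑ a ∈ B, Finsupp.single a 1

namespace Stmt10Aux

variable {n : ℕ}

lemma baseExp_apply (C : Finset (Fin n)) (a : Fin n) :
    baseExp C a = if a ∈ C then 1 else 0 := by
  classical
  rw [baseExp, Finsupp.finset_sum_apply]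
  simp [Finsupp.single_apply]

lemma baseExp_insert {j : Fin n} {C : Finset (Fin n)} (h : j ∉ C) :
    baseExp (insert j C) = Finsupp.single j 1 + baseExp C := by
  rw [baseExp, Finset.sum_insert h]; rfl

lemma lexLT_irrefl (C : Finset (Fin n)) : ¬ lexLT C C := by
  rintro ⟨a, -, ha, -⟩
  simp [symmDiff_self] at ha

lemma lexLT_asymm {C C' : Finset (Fin n)} (h : lexLT C' C) (h' : lexLT C C') : False := by
  obtain ⟨a, haC, haD, hamin⟩ := h
  obtain ⟨b, hbC', hbD, hbmin⟩ := h'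
  rw [symmDiff_comm] at hbD hbmin
  have hab : a = b := le_antisymm (hamin b hbD) (hbmin a haD)
  subst hab
  rcases Finset.mem_symmDiff.1 haD with ⟨-, hn⟩ | ⟨-, hn⟩
  · exact hn hbC'
  · exact hn haC

lemma lexLT_swap {C : Finset (Fin n)} {h p : Fin n} (hh : h ∈ C) (hp : p ∉ C) :
    lexLT (insert p (C.erase h)) C ↔ h < p := by
  have hne : h ≠ p := fun e => hp (e ▸ hh)
  have hsd : C ∆ (insert p (C.erase h)) = {h, p} := by
    ext a
    simp only [Finset.mem_symmDiff, Finset.mem_insert, Finset.mem_erase, Finset.mem_singleton]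
    constructor
    · rintro (⟨haC, hno⟩ | ⟨ha, hnC⟩)
      · push_neg at hno
        exact Or.inl (by by_contra hah; exact hno.2 hah haC)
      · rcases ha with rfl | ⟨-, haC⟩
        · exact Or.inr rfl
        · exact absurd haC hnC
    · rintro (rfl | rfl)
      · exact Or.inl ⟨hh, by push_neg; exact ⟨hne, fun hne' => absurd rfl hne'⟩⟩
      · exact Or.inr ⟨Or.inl rfl, hp⟩
  constructor
  · rintro ⟨a, haC, haD, hmin⟩
    rw [hsd] at haD hmin
    have hah : a = h := by
      rcases Finset.mem_insert.1 haD with rfl | ha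
      · rfl
      · exact absurd haC (by rw [Finset.mem_singleton] at ha; rw [ha]; exact hp)
    subst hah
    exact lt_of_le_of_ne (hmin p (by simp)) hne
  · intro hlt
    refine ⟨h, hh, by rw [hsd]; simp, ?_⟩
    rw [hsd]
    intro b hb
    rcases Finset.mem_insert.1 hb with rfl | hb'
    · exact le_refl _
    · rw [Finset.mem_singleton] at hb'; rw [hb']; exact le_of_lt hlt

lemma coexchange {α : Type*} {M : Matroid α} (hE : M.E = Set.univ)
    {Bs D : Set α} (hB : M.IsBase Bs) (hD : M.IsBase D) {y : α} (hyD : y ∈ D) (hyB : y ∉ Bs) :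
    ∃ x, x ∈ Bs ∧ x ∉ D ∧ M.IsBase (insert y (Bs \ {x})) := by
  have hB' := hB.compl_isBase_dual
  have hD' := hD.compl_isBase_dual
  have hy : y ∈ (M.E \ Bs) \ (M.E \ D) := by simp [hE, hyB, hyD]
  obtain ⟨x, hx, hbase⟩ := hB'.exchange hD' hy
  rw [hE] at hx
  simp only [Set.mem_diff, Set.mem_univ, true_and, not_and, not_not] at hx
  have hxB : x ∈ Bs := hx.2
  have hxD : x ∉ D := hx.1
  have hxy : x ≠ y := fun e => hxD (e ▸ hyD)
  refine ⟨x, hxB, hxD, ?_⟩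
  have hc := hbase.compl_isBase_of_dual
  have heq : M.E \ (insert x ((M.E \ Bs) \ {y})) = insert y (Bs \ {x}) := by
    rw [hE]
    ext a
    simp only [Set.mem_diff, Set.mem_univ, true_and, Set.mem_insert_iff,
      Set.mem_singleton_iff]
    have h1 : x ∈ Bs := hxB
    have h2 : y ∉ Bs := hyB
    have h3 : x ≠ y := hxy
    have h4 : a = x → a = y → False := fun p q => hxy (p.symm.trans q)
    tauto
  rwa [heq] at hc

lemma baseExp_le_iff (C D : Finset (Fin n)) (p : Fin n) :
    baseExp C ≤ Finsupp.single p 1 + baseExp D ↔ C ⊆ insert p D := by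
  classical
  rw [Finsupp.le_def]
  constructor
  · intro H a haC
    have h1 := H a
    rw [Finsupp.add_apply, baseExp_apply, baseExp_apply, Finsupp.single_apply,
      if_pos haC] at h1
    by_contra hnot
    rw [Finset.mem_insert] at hnot
    push_neg at hnot
    rw [if_neg (fun e => hnot.1 e.symm), if_neg hnot.2] at h1
    omega
  · intro H a
    rw [Finsupp.add_apply, baseExp_apply, baseExp_apply, Finsupp.single_apply]
    by_cases haC : a ∈ C
    · rw [if_pos haC]
      rcases Finset.mem_insert.1 (H haC) with rfl | haD
      · rw [if_pos rfl]; exact Nat.le_add_right 1 _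
      · rw [if_pos haD]; exact Nat.le_add_left 1 _
    · rw [if_neg haC]; exact Nat.zero_le _

lemma mem_colon_iff {k : Type} [Field k] {t : ℕ} (B : Fin t → Finset (Fin n))
    (i : Fin t) (p : Fin n) :
    ((X p : MvPolynomial (Fin n) k) ∈
        Submodule.colon
          (Ideal.span ((fun l => monomial (baseExp (B l)) (1 : k)) '' {l | l < i}))
          (Ideal.span {monomial (baseExp (B i)) (1 : k)})) ↔
      ∃ l, l < i ∧ B l ⊆ insert p (B i) := by
  classical
  rw [Ideal.mem_colon_span_singleton, X, monomial_mul, one_mul]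
  have himg : ((fun l => monomial (baseExp (B l)) (1 : k)) '' {l | l < i})
      = ((fun s => monomial s (1 : k)) '' ((fun l => baseExp (B l)) '' {l | l < i})) := by
    rw [Set.image_image]
  rw [himg, mem_ideal_span_monomial_image]
  rw [support_monomial, if_neg (one_ne_zero)]
  constructor
  · intro H
    obtain ⟨si, ⟨l, hl, rfl⟩, hle⟩ := H _ (Finset.mem_singleton_self _)
    exact ⟨l, hl, (baseExp_le_iff _ _ _).1 hle⟩
  · rintro ⟨l, hl, hsub⟩ xi hxi
    rw [Finset.mem_singleton] at hxi
    subst hxi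
    exact ⟨baseExp (B l), ⟨l, hl, rfl⟩, (baseExp_le_iff _ _ _).2 hsub⟩

lemma exists_lt_subset_iff {t : ℕ} (M : Matroid (Fin n)) (B : Fin t → Finset (Fin n))
    (hbase : ∀ i, M.IsBase ↑(B i))
    (hall : ∀ C : Finset (Fin n), M.IsBase ↑C → ∃ i, B i = C)
    (hsort : ∀ i j : Fin t, i < j → lexLT (B i) (B j)) (i : Fin t) (p : Fin n) :
    (∃ l, l < i ∧ B l ⊆ insert p (B i)) ↔
      (p ∉ B i ∧ ∃ h ∈ B i, h < p ∧ M.IsBase ↑(insert p ((B i).erase h))) := by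
  classical
  have hcard : ∀ l i' : Fin t, (B l).card = (B i').card := by
    intro l i'
    have h := (hbase l).ncard_eq_ncard_of_isBase (hbase i')
    simpa [Set.ncard_coe_finset] using h
  have hlt_of_lex : ∀ l i' : Fin t, lexLT (B l) (B i') → l < i' := by
    intro l i' hlex
    rcases lt_trichotomy l i' with h | rfl | h
    · exact h
    · exact absurd hlex (lexLT_irrefl _)
    · exact absurd (hsort i' l h) (fun h' => lexLT_asymm hlex h')
  constructor
  · rintro ⟨l, hl, hsub⟩
    have hlex := hsort l i hl
    have hne : B l ≠ B i := fun e => lexLT_irrefl _ (e ▸ hlex)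
    have hpBi : p ∉ B i := by
      intro hp
      rw [Finset.insert_eq_self.2 hp] at hsub
      exact hne (Finset.eq_of_subset_of_card_le hsub (le_of_eq (hcard i l)))
    have hpBl : p ∈ B l := by
      by_contra hp
      have hsub2 : B l ⊆ B i := fun a ha =>
        (Finset.mem_insert.1 (hsub ha)).resolve_left (fun e => hp (e ▸ ha))
      exact hne (Finset.eq_of_subset_of_card_le hsub2 (le_of_eq (hcard i l)))
    have hsub' : (B l).erase p ⊆ B i := by
      intro a ha
      obtain ⟨hap, haBl⟩ := Finset.mem_erase.1 ha
      exact (Finset.mem_insert.1 (hsub haBl)).resolve_left hap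
    have hpos : 0 < (B l).card := Finset.card_pos.2 ⟨p, hpBl⟩
    rw [hcard l i] at hpos
    have hcards : ((B i) \ (B l).erase p).card = 1 := by
      rw [Finset.card_sdiff_of_subset hsub', Finset.card_erase_of_mem hpBl, hcard l i]
      omega
    obtain ⟨h, hh⟩ := Finset.card_eq_one.1 hcards
    have hhmem := hh ▸ Finset.mem_singleton_self h
    have hhBi : h ∈ B i := (Finset.mem_sdiff.1 hhmem).1
    have hhBl : h ∉ B l := by
      intro hmem
      exact (Finset.mem_sdiff.1 hhmem).2
        (Finset.mem_erase.2 ⟨fun e => hpBi (e ▸ hhBi), hmem⟩)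
    have hBl : B l = insert p ((B i).erase h) := by
      apply Finset.eq_of_subset_of_card_le
      · intro a ha
        rcases eq_or_ne a p with rfl | hap
        · exact Finset.mem_insert_self _ _
        · exact Finset.mem_insert.2 (Or.inr (Finset.mem_erase.2
            ⟨fun e => hhBl (e ▸ ha), (Finset.mem_insert.1 (hsub ha)).resolve_left hap⟩))
      · rw [Finset.card_insert_of_notMem (fun hmem => hpBi (Finset.mem_of_mem_erase hmem)),
          Finset.card_erase_of_mem hhBi, hcard l i]
        have hpos2 : 0 < (B i).card := Finset.card_pos.2 ⟨h, hhBi⟩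
        omega
    refine ⟨hpBi, h, hhBi, ?_, by rw [← hBl]; exact hbase l⟩
    exact (lexLT_swap hhBi hpBi).1 (hBl ▸ hlex)
  · rintro ⟨hpBi, h, hhBi, hhp, hbaseC⟩
    obtain ⟨l, hBl⟩ := hall _ hbaseC
    have hlex : lexLT (B l) (B i) := by
      rw [hBl]; exact (lexLT_swap hhBi hpBi).2 hhp
    refine ⟨l, hlt_of_lex l i hlex, ?_⟩
    rw [hBl]
    intro a ha
    rcases Finset.mem_insert.1 ha with rfl | ha'
    · exact Finset.mem_insert_self _ _
    · exact Finset.mem_insert.2 (Or.inr (Finset.mem_of_mem_erase ha'))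

end Stmt10Aux

open Stmt10Aux

/-- Let `M` be a matroid on `{1,…,n}` with bases `B_1, …, B_t` listed in
increasing lexicographic order, let `I` be the squarefree matroidal ideal generated by the
`m_i = x^{B_i}` (which has linear quotients), and let `A_i` be the critical-index sets.
Then `I` is crit-monotone: for every `i` and every `j ∈ A_i`, the unique decomposition
`x_j·m_i = u·m_κ` with `supp(u) ∩ A_κ = ∅` has `u` equal to a single variable `x_l`, and
`A_κ ⊆ A_i`. -/
theorem stmt_10 (k : Type) [Field k] (n t : ℕ)
    (M : Matroid (Fin n)) (hE : M.E = Set.univ)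
    (B : Fin t → Finset (Fin n))
    (hbase : ∀ i, M.IsBase ↑(B i))
    (hall : ∀ C : Finset (Fin n), M.IsBase ↑C → ∃ i, B i = C)
    (hsort : ∀ i j : Fin t, i < j → lexLT (B i) (B j)) :
    ∀ i : Fin t, ∀ j : Fin n,
      (X j : MvPolynomial (Fin n) k) ∈
        Submodule.colon
          (Ideal.span ((fun l => monomial (baseExp (B l)) (1 : k)) '' {l | l < i}))
          (Ideal.span {monomial (baseExp (B i)) (1 : k)}) →
      ∀ (κ : Fin t) (β : Fin n →₀ ℕ),
        Finsupp.single j 1 + baseExp (B i) = β + baseExp (B κ) →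
        (∀ g ∈ β.support,
          (X g : MvPolynomial (Fin n) k) ∉
            Submodule.colon
              (Ideal.span ((fun l => monomial (baseExp (B l)) (1 : k)) '' {l | l < κ}))
              (Ideal.span {monomial (baseExp (B κ)) (1 : k)})) →
        (∃ l : Fin n, β = Finsupp.single l 1)
        ∧
        {g : Fin n | (X g : MvPolynomial (Fin n) k) ∈
            Submodule.colon
              (Ideal.span ((fun l => monomial (baseExp (B l)) (1 : k)) '' {l | l < κ}))
              (Ideal.span {monomial (baseExp (B κ)) (1 : k)})}
          ⊆
        {g : Fin n | (X g : MvPolynomial (Fin n) k) ∈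
            Submodule.colon
              (Ideal.span ((fun l => monomial (baseExp (B l)) (1 : k)) '' {l | l < i}))
              (Ideal.span {monomial (baseExp (B i)) (1 : k)})} := by
  classical
  have hchar : ∀ (i' : Fin t) (p : Fin n),
      ((X p : MvPolynomial (Fin n) k) ∈
        Submodule.colon
          (Ideal.span ((fun l => monomial (baseExp (B l)) (1 : k)) '' {l | l < i'}))
          (Ideal.span {monomial (baseExp (B i')) (1 : k)})) ↔
      (p ∉ B i' ∧ ∃ h ∈ B i', h < p ∧ M.IsBase ↑(insert p ((B i').erase h))) :=
    fun i' p => (mem_colon_iff B i' p).trans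
      (exists_lt_subset_iff M B hbase hall hsort i' p)
  have hcard : ∀ l i' : Fin t, (B l).card = (B i').card := by
    intro l i'
    have h := (hbase l).ncard_eq_ncard_of_isBase (hbase i')
    simpa [Set.ncard_coe_finset] using h
  have hBinj : Function.Injective B := by
    intro l i' he
    by_contra hne
    rcases lt_trichotomy l i' with h | h | h
    · exact lexLT_irrefl _ (he ▸ hsort l i' h)
    · exact hne h
    · exact lexLT_irrefl _ (he ▸ hsort i' l h)
  intro i j hj κ β heq hβ
  obtain ⟨hjBi, -⟩ := (hchar i j).1 hj
  have heq' : baseExp (insert j (B i)) = β + baseExp (B κ) := by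
    rw [baseExp_insert hjBi]; exact heq
  have hpt : ∀ a, (if a ∈ insert j (B i) then 1 else 0) = β a + (if a ∈ B κ then 1 else 0) := by
    intro a
    have h := congrArg (fun f : Fin n →₀ ℕ => f a) heq'
    simpa [baseExp_apply, Finsupp.add_apply] using h
  have hsubκ : B κ ⊆ insert j (B i) := by
    intro a ha
    have h := hpt a
    rw [if_pos ha] at h
    by_contra hnot
    rw [if_neg hnot] at h
    omega
  have hβval : ∀ a, β a = if a ∈ (insert j (B i)) \ B κ then 1 else 0 := by
    intro a
    have h1 := hpt a
    by_cases h2 : a ∈ B κ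
    · rw [if_pos h2, if_pos (hsubκ h2)] at h1
      rw [if_neg (fun hmem => (Finset.mem_sdiff.1 hmem).2 h2)]
      omega
    · rw [if_neg h2] at h1
      by_cases h3 : a ∈ insert j (B i)
      · rw [if_pos h3] at h1
        rw [if_pos (Finset.mem_sdiff.2 ⟨h3, h2⟩)]
        omega
      · rw [if_neg h3] at h1
        rw [if_neg (fun hmem => h3 (Finset.mem_sdiff.1 hmem).1)]
        omega
  have hcardd : ((insert j (B i)) \ B κ).card = 1 := by
    rw [Finset.card_sdiff_of_subset hsubκ, Finset.card_insert_of_notMem hjBi, hcard κ i]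
    omega
  obtain ⟨g, hg⟩ := Finset.card_eq_one.1 hcardd
  have hgmem' := hg ▸ Finset.mem_singleton_self g
  have hgmem : g ∈ insert j (B i) := (Finset.mem_sdiff.1 hgmem').1
  have hgκ : g ∉ B κ := (Finset.mem_sdiff.1 hgmem').2
  have hβ_single : β = Finsupp.single g 1 := by
    ext a
    rw [hβval a, hg, Finsupp.single_apply]
    by_cases hag : a = g
    · subst hag; rw [if_pos (Finset.mem_singleton_self a), if_pos rfl]
    · rw [if_neg (fun hm => hag (Finset.mem_singleton.1 hm)), if_neg (fun e => hag e.symm)]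
  have hBκ : B κ = (insert j (B i)).erase g := by
    apply Finset.eq_of_subset_of_card_le
    · intro a ha
      exact Finset.mem_erase.2 ⟨fun e => hgκ (e ▸ ha), hsubκ ha⟩
    · rw [Finset.card_erase_of_mem hgmem, Finset.card_insert_of_notMem hjBi, hcard κ i]
      omega
  refine ⟨⟨g, hβ_single⟩, ?_⟩
  by_cases hgj : g = j
  · subst hgj
    have hBκi : B κ = B i := by rw [hBκ, Finset.erase_insert hjBi]
    have hκi : κ = i := hBinj hBκi
    subst hκi
    exact Set.Subset.rfl
  · have hgBi : g ∈ B i := (Finset.mem_insert.1 hgmem).resolve_left hgj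
    have hBκ' : B κ = insert j ((B i).erase g) := by
      rw [hBκ, Finset.erase_insert_of_ne (fun e => hgj e.symm)]
    have hjκ : j ∈ B κ := by rw [hBκ']; exact Finset.mem_insert_self _ _
    have hgsupp : g ∈ β.support := by
      rw [hβ_single, Finsupp.support_single_ne_zero _ one_ne_zero]
      exact Finset.mem_singleton_self g
    have hgnot := hβ g hgsupp
    rw [hchar κ g] at hgnot
    have hno : ∀ h ∈ B κ, h < g → ¬ M.IsBase ↑(insert g ((B κ).erase h)) :=
      fun h hh hlt hb => hgnot ⟨hgκ, h, hh, hlt, hb⟩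
    have hκerasej : (B κ).erase j = (B i).erase g := by
      rw [hBκ', Finset.erase_insert (fun hmem => hjBi (Finset.mem_of_mem_erase hmem))]
    have hgj' : g < j := by
      rcases lt_trichotomy g j with h | h | h
      · exact h
      · exact absurd h hgj
      · exfalso
        apply hno j hjκ h
        rw [hκerasej, Finset.insert_erase hgBi]
        exact hbase i
    intro p hp
    simp only [Set.mem_setOf_eq] at hp ⊢
    rw [hchar κ p] at hp
    rw [hchar i p]
    obtain ⟨hpκ, h, hhκ, hhp, hD⟩ := hp
    have hpg : p ≠ g := by
      rintro rfl
      exact hno h hhκ hhp hD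
    have hpj : p ≠ j := fun e => hpκ (e ▸ hjκ)
    have hpBi : p ∉ B i := by
      intro hmem
      apply hpκ
      rw [hBκ']
      exact Finset.mem_insert.2 (Or.inr (Finset.mem_erase.2 ⟨hpg, hmem⟩))
    refine ⟨hpBi, ?_⟩
    by_cases hhj : h = j
    · subst hhj
      refine ⟨g, hgBi, lt_trans hgj' hhp, ?_⟩
      rwa [hκerasej] at hD
    · have hhκ' : h ∈ (B i).erase g := by
        rw [hBκ'] at hhκ
        exact (Finset.mem_insert.1 hhκ).resolve_left hhj
      have hhBi : h ∈ B i := Finset.mem_of_mem_erase hhκ'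
      have hhg : h ≠ g := (Finset.mem_erase.1 hhκ').1
      have hcoe : ∀ (y x : Fin n) (s : Finset (Fin n)),
          (↑(insert y (s.erase x)) : Set (Fin n)) = insert y ((↑s : Set (Fin n)) \ {x}) := by
        intro y x s
        rw [Finset.coe_insert, Finset.coe_erase]
      -- membership facts about D₀ := insert p ((B κ).erase h)
      have hDmem : ∀ a : Fin n, a ∈ insert p ((B κ).erase h) → a = p ∨ a = j ∨ a ∈ B i := by
        intro a ha
        rcases Finset.mem_insert.1 ha with rfl | ha'
        · exact Or.inl rfl
        · have haκ : a ∈ B κ := Finset.mem_of_mem_erase ha'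
          rw [hBκ'] at haκ
          rcases Finset.mem_insert.1 haκ with rfl | ha''
          · exact Or.inr (Or.inl rfl)
          · exact Or.inr (Or.inr (Finset.mem_of_mem_erase ha''))
      rcases lt_or_gt_of_ne hhg with hlt | hgt
      · -- h < g : use exchange with x = h
        have hhD : h ∉ insert p ((B κ).erase h) := by
          intro hmem
          rcases Finset.mem_insert.1 hmem with rfl | hmem'
          · exact absurd hhp (lt_irrefl _)
          · exact Finset.notMem_erase _ _ hmem'
        obtain ⟨y, hy, hybase⟩ := (hbase i).exchange hD ⟨hhBi, by
          rw [Finset.mem_coe]; exact hhD⟩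
        have hyD : y ∈ insert p ((B κ).erase h) := hy.1
        have hyBi : y ∉ B i := hy.2
        rcases hDmem y hyD with rfl | hyj | hmem
        · -- y = p
          refine ⟨h, hhBi, hhp, ?_⟩
          rw [hcoe]
          exact hybase
        · -- y = j : contradiction
          exfalso
          rw [hyj] at hybase
          have hhBκ : h ∈ B κ := by
            rw [hBκ']
            exact Finset.mem_insert.2 (Or.inr hhκ')
          apply hno h hhBκ hlt
          have heqf : insert g ((B κ).erase h) = insert j ((B i).erase h) := by
            rw [hBκ', Finset.erase_insert_of_ne (fun e => hhj e.symm)]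
            ext a
            simp only [Finset.mem_insert, Finset.mem_erase]
            constructor
            · rintro (rfl | rfl | ⟨hah, hag, haBi⟩)
              · exact Or.inr ⟨Ne.symm hhg, hgBi⟩
              · exact Or.inl rfl
              · exact Or.inr ⟨hah, haBi⟩
            · rintro (rfl | ⟨hah, haBi⟩)
              · exact Or.inr (Or.inl rfl)
              · rcases eq_or_ne a g with rfl | hag
                · exact Or.inl rfl
                · exact Or.inr (Or.inr ⟨hah, hag, haBi⟩)
          rw [heqf, hcoe]
          exact hybase
        · exact absurd hmem hyBi
      · -- g < h : use coexchange with y = p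
        obtain ⟨x, hxBi, hxD, hxbase⟩ := coexchange hE (hbase i) hD
          (y := p) (by rw [Finset.mem_coe]; exact Finset.mem_insert_self _ _)
          (by rw [Finset.mem_coe]; exact hpBi)
        rw [Finset.mem_coe] at hxBi hxD
        have hxgh : x = g ∨ x = h := by
          by_contra hcon
          push_neg at hcon
          apply hxD
          refine Finset.mem_insert.2 (Or.inr (Finset.mem_erase.2 ⟨hcon.2, ?_⟩))
          rw [hBκ']
          exact Finset.mem_insert.2 (Or.inr (Finset.mem_erase.2 ⟨hcon.1, hxBi⟩))
        rcases hxgh with rfl | rfl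
        · refine ⟨x, hxBi, lt_trans hgt hhp, ?_⟩
          rw [hcoe]
          exact hxbase
        · refine ⟨x, hxBi, hhp, ?_⟩
          rw [hcoe]
          exact hxbase
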